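/- arXiv:2209.07279 — 2 statements merged into one kernel-verified Lean document; each statement's English description precedes it below -/
import Mathlib

section
/- If n ∈ ℕ, a₁, …, a_n ≥ 0 are real numbers and c > 0 is such that ∑_{j=1}^n a_j(1 + a_j)/(1 + log⁺(1/a_j))^{1/2} ≥ c (where summands with a_j = 0 are read as 0), then max_{1 ≤ j ≤ n} a_j ≥ min{c/(2√2), 1} · √(log n)/n. -/
open Matrix
open scoped BigOperators Classical ComplexOrder

namespace QPaper

variable {ι : Type*} [Fintype ι] [DecidableEq ι]

/-- The positive semidefinite square root of a matrix (junk value `0` if the matrix is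
not positive semidefinite). -/
noncomputable def psdSqrt (X : Matrix ι ι ℂ) : Matrix ι ι ℂ :=
  if h : X.PosSemidef then
    h.1.eigenvectorUnitary.1 * diagonal ((↑) ∘ (√·) ∘ h.1.eigenvalues) *
      (star h.1.eigenvectorUnitary : Matrix ι ι ℂ)
  else 0

/-- The normalized trace (Schatten 1) norm `‖X‖₁ = tr |X| / card ι`. -/
noncomputable def normOne (X : Matrix ι ι ℂ) : ℝ :=
  (psdSqrt (Xᴴ * X)).trace.re / Fintype.card ι

/-- The normalized Schatten 2 norm `‖X‖₂ = (tr (X* X) / card ι)^{1/2}`. -/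
noncomputable def normTwo (X : Matrix ι ι ℂ) : ℝ :=
  Real.sqrt ((Xᴴ * X).trace.re / Fintype.card ι)

/-- The operator norm of a matrix, acting on the Euclidean space. -/
noncomputable def opNorm (X : Matrix ι ι ℂ) : ℝ :=
  ‖Matrix.toEuclideanCLM (𝕜 := ℂ) X‖

/-- The Loewner order: `X ≤ Y` iff `Y - X` is positive semidefinite. -/
def LoewnerLE (X Y : Matrix ι ι ℂ) : Prop := (Y - X).PosSemidef

/-- Configurations of `n` qubits. -/
abbrev QState (n : ℕ) := Fin n → Fin 2

/-- The algebra of `n`-qubit observables `M₂(ℂ)^{⊗ n}`. -/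
abbrev Obs (n : ℕ) := Matrix (QState n) (QState n) ℂ

/-- The conditional expectation `E_S = ⊗_{j ∈ S} (½ tr)(·) 𝟏 ⊗ id` replacing each qubit in `S`
by its normalized partial trace:  `E_S(A) = 2^{-|S|} tr_S(A) ⊗ 𝟏_S`. -/
noncomputable def ESet {n : ℕ} (S : Finset (Fin n)) (A : Obs n) : Obs n :=
  Matrix.of fun x y =>
    if ∀ j ∈ S, x j = y j then
      ((2 : ℂ) ^ n)⁻¹ *
        ∑ z : QState n,
          A (fun j => if j ∈ S then z j else x j) (fun j => if j ∈ S then z j else y j)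
    else 0

/-- The derivation `d_j = 𝕀^{⊗(j-1)} ⊗ (𝕀 - ½ tr(·) 𝟏) ⊗ 𝕀^{⊗(n-j)}`. -/
noncomputable def dCoord {n : ℕ} (j : Fin n) (A : Obs n) : Obs n := A - ESet {j} A

/-- The quantum depolarizing semigroup `P_t = (e^{-t} 𝕀 + (1 - e^{-t}) ½ tr(·) 𝟏)^{⊗ n}`. -/
noncomputable def Pt {n : ℕ} (t : ℝ) (A : Obs n) : Obs n :=
  ∑ S : Finset (Fin n),
    (Real.exp (-t) ^ (n - S.card) * (1 - Real.exp (-t)) ^ S.card) • ESet S A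

/-- The generator `𝓛 = ∑_j d_j`. -/
noncomputable def Lgen {n : ℕ} (A : Obs n) : Obs n := ∑ j : Fin n, dCoord j A

/-- The carré du champ `Γ(A) = ½ (𝓛(A*) A + A* 𝓛(A) - 𝓛(A* A))`. -/
noncomputable def carre {n : ℕ} (A : Obs n) : Obs n :=
  (2 : ℂ)⁻¹ • (Lgen Aᴴ * A + Aᴴ * Lgen A - Lgen (Aᴴ * A))

/-- The total `L¹`-influence `Inf¹(A) = ∑_j ‖d_j A‖₁`. -/
noncomputable def inf1 {n : ℕ} (A : Obs n) : ℝ := ∑ j : Fin n, normOne (dCoord j A)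

/-- The total `L²`-influence `Inf²(A) = ∑_j ‖d_j A‖₂²`. -/
noncomputable def inf2 {n : ℕ} (A : Obs n) : ℝ := ∑ j : Fin n, normTwo (dCoord j A) ^ 2

/-- The mean part `2^{-n} tr(A) 𝟏`. -/
noncomputable def meanPart {n : ℕ} (A : Obs n) : Obs n :=
  (A.trace / (2 : ℂ) ^ n) • (1 : Obs n)

/-- The variance `Var(A) = ‖A - 2^{-n} tr(A) 𝟏‖₂²`. -/
noncomputable def Var {n : ℕ} (A : Obs n) : ℝ := normTwo (A - meanPart A) ^ 2


/-- If `a₁, …, a_n ≥ 0` and `c > 0` satisfy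
`∑_j a_j (1 + a_j) / (1 + log⁺(1/a_j))^{1/2} ≥ c`, then
`max_j a_j ≥ min {c/(2√2), 1} · √(log n) / n`. -/
theorem aux_kkl_lemma (n : ℕ) (a : Fin n → ℝ) (ha : ∀ j, 0 ≤ a j) (c : ℝ) (hc : 0 < c)
    (h : c ≤ ∑ j : Fin n,
      a j * (1 + a j) / Real.sqrt (1 + (Real.log (1 / a j) ⊔ 0))) :
    ∃ j : Fin n,
      min (c / (2 * Real.sqrt 2)) 1 * (Real.sqrt (Real.log n) / n) ≤ a j := by
  classical
  rcases Nat.eq_zero_or_pos n with hn0 | hn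
  · exfalso; subst hn0; simp at h; linarith
  have hne : (Finset.univ : Finset (Fin n)).Nonempty := by
    simpa [Finset.univ_nonempty_iff] using Fin.pos_iff_nonempty.mp hn
  obtain ⟨j₀, -, hj₀⟩ := Finset.exists_max_image Finset.univ a hne
  set M := a j₀ with hMdef
  have hMle : ∀ j, a j ≤ M := fun j => hj₀ j (Finset.mem_univ j)
  have hM0 : 0 ≤ M := ha j₀
  refine ⟨j₀, ?_⟩
  have hs2 : (0:ℝ) < Real.sqrt 2 := Real.sqrt_pos.mpr (by norm_num)
  have hmin1 : min (c / (2 * Real.sqrt 2)) 1 ≤ 1 := min_le_right _ _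
  have hminc : min (c / (2 * Real.sqrt 2)) 1 ≤ c / (2 * Real.sqrt 2) := min_le_left _ _
  have hmin0 : 0 ≤ min (c / (2 * Real.sqrt 2)) 1 := by
    refine le_min ?_ (by norm_num)
    positivity
  set L := Real.sqrt (Real.log n) with hLdef
  have hL0 : 0 ≤ L := Real.sqrt_nonneg _
  have hnpos : (0:ℝ) < n := by exact_mod_cast hn
  have hlogn_le : Real.log n ≤ n := by
    have := Real.log_le_sub_one_of_pos hnpos
    linarith
  have hLn : L ≤ n := by
    rw [hLdef]
    calc Real.sqrt (Real.log n) ≤ Real.sqrt ((n:ℝ)^2) := by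
          apply Real.sqrt_le_sqrt
          have hn1 : (1:ℝ) ≤ n := by exact_mod_cast hn
          nlinarith
      _ = n := Real.sqrt_sq (le_of_lt hnpos)
  have hLn1 : L / n ≤ 1 := by
    rw [div_le_one hnpos]; exact hLn
  by_cases h1 : 1 ≤ M
  · calc min (c / (2 * Real.sqrt 2)) 1 * (L / n) ≤ 1 * (L / n) := by
          apply mul_le_mul_of_nonneg_right hmin1; positivity
      _ = L / n := one_mul _
      _ ≤ 1 := hLn1
      _ ≤ M := h1
  push_neg at h1
  by_cases h2 : L / n ≤ M
  · calc min (c / (2 * Real.sqrt 2)) 1 * (L / n) ≤ 1 * (L / n) := by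
          apply mul_le_mul_of_nonneg_right hmin1; positivity
      _ = L / n := one_mul _
      _ ≤ M := h2
  push_neg at h2
  -- Now M < L/n and M < 1.  First, M > 0.
  have hMpos : 0 < M := by
    rcases lt_or_eq_of_le hM0 with h | h
    · exact h
    · exfalso
      have hz : ∀ j, a j = 0 :=
        fun j => le_antisymm (le_of_le_of_eq (hMle j) h.symm) (ha j)
      have : (∑ j : Fin n, a j * (1 + a j) / Real.sqrt (1 + (Real.log (1 / a j) ⊔ 0))) = 0 := by
        apply Finset.sum_eq_zero; intro j _; rw [hz j]; simp
      linarith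
  -- n ≥ 2 : if n = 1, L = 0 and M < 0 contradiction
  have hn2 : 2 ≤ n := by
    by_contra hcon
    have hn1 : n = 1 := by omega
    have hlz : Real.log n = 0 := by rw [hn1]; simp
    have hLz : L = 0 := by rw [hLdef, hlz, Real.sqrt_zero]
    rw [hLz, zero_div] at h2
    linarith
  have hlog2 : (0:ℝ) < Real.log n := by
    apply Real.log_pos
    exact_mod_cast Nat.lt_of_lt_of_le one_lt_two hn2
  have hLpos : 0 < L := Real.sqrt_pos.mpr hlog2
  -- √n ≤ 1/M, i.e. log(1/M) ≥ (1/2) log n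
  have hsqrtn : Real.sqrt n ≤ 1 / M := by
    have h1n : Real.sqrt n * L ≤ n := by
      calc Real.sqrt n * L ≤ Real.sqrt n * Real.sqrt n := by
            apply mul_le_mul_of_nonneg_left _ (Real.sqrt_nonneg _)
            rw [hLdef]; exact Real.sqrt_le_sqrt hlogn_le
        _ = n := Real.mul_self_sqrt (le_of_lt hnpos)
    have hMn : M * n < L := (lt_div_iff₀ hnpos).mp h2
    rw [le_div_iff₀ hMpos]
    have hsn : (0:ℝ) < Real.sqrt n := Real.sqrt_pos.mpr hnpos
    nlinarith [mul_lt_mul_of_pos_left hMn hsn, h1n, hnpos]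
  have hlogM : Real.log n / 2 ≤ Real.log (1 / M) := by
    have h1 : Real.log (Real.sqrt n) ≤ Real.log (1 / M) := by
      apply Real.log_le_log (Real.sqrt_pos.mpr hnpos) hsqrtn
    rwa [Real.log_sqrt (le_of_lt hnpos)] at h1
  -- key termwise bound
  have key : ∀ j : Fin n,
      a j * (1 + a j) / Real.sqrt (1 + (Real.log (1 / a j) ⊔ 0)) ≤ 2 * Real.sqrt 2 * M / L := by
    intro j
    rcases eq_or_lt_of_le (ha j) with hz | hpos
    · rw [← hz]; simp; positivity
    · have haM : a j ≤ M := hMle j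
      have hnum : a j * (1 + a j) ≤ 2 * M := by nlinarith
      have hdenom : L / Real.sqrt 2 ≤ Real.sqrt (1 + (Real.log (1 / a j) ⊔ 0)) := by
        have hmax : (0:ℝ) ≤ Real.log (1 / a j) ⊔ 0 := le_max_right _ _
        rw [Real.le_sqrt (by positivity)]
        have hsq : (L / Real.sqrt 2) ^ 2 = Real.log n / 2 := by
          rw [div_pow, Real.sq_sqrt (by norm_num : (0:ℝ) ≤ 2), hLdef,
            Real.sq_sqrt (le_of_lt hlog2)]
        rw [hsq]
        have hlogj : Real.log (1 / M) ≤ Real.log (1 / a j) := by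
          apply Real.log_le_log (by positivity)
          exact one_div_le_one_div_of_le hpos haM
        have : Real.log (1 / a j) ≤ Real.log (1 / a j) ⊔ 0 := le_max_left _ _
        linarith
        linarith
      calc a j * (1 + a j) / Real.sqrt (1 + (Real.log (1 / a j) ⊔ 0))
          ≤ 2 * M / (L / Real.sqrt 2) := by
            apply div_le_div₀ (by positivity) hnum (by positivity) hdenom
        _ = 2 * Real.sqrt 2 * M / L := by
            field_simp
  have hsum : c ≤ n * (2 * Real.sqrt 2 * M / L) := by
    calc c ≤ ∑ j : Fin n, a j * (1 + a j) / Real.sqrt (1 + (Real.log (1 / a j) ⊔ 0)) := h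
      _ ≤ ∑ _j : Fin n, 2 * Real.sqrt 2 * M / L := Finset.sum_le_sum (fun j _ => key j)
      _ = n * (2 * Real.sqrt 2 * M / L) := by
          rw [Finset.sum_const, Finset.card_univ, Fintype.card_fin, nsmul_eq_mul]
  have hcL : c * L ≤ 2 * Real.sqrt 2 * M * n := by
    have h' : c ≤ (2 * Real.sqrt 2 * M * n) / L := by
      rw [mul_comm (n:ℝ)] at hsum
      rw [div_mul_eq_mul_div] at hsum
      exact hsum
    exact (le_div_iff₀ hLpos).mp h'
  calc min (c / (2 * Real.sqrt 2)) 1 * (L / n)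
      ≤ c / (2 * Real.sqrt 2) * (L / n) := by
        apply mul_le_mul_of_nonneg_right hminc; positivity
    _ = c * L / (2 * Real.sqrt 2 * n) := by ring
    _ ≤ M := by
        rw [div_le_iff₀ (by positivity)]
        nlinarith

end QPaper
end

section
/- For every N ≥ 1, every m ≥ 1, and all matrices X₁, …, X_m, Y₁, …, Y_m ∈ M_N(ℂ), one has |∑_{j=1}^m ⟨X_j, Y_j⟩| ≤ ‖(∑_{j=1}^m X_j* X_j)^{1/2}‖₁ · ‖∑_{j=1}^m Y_j* Y_j‖^{1/2}, where the square root is the positive semidefinite square root. -/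
open Matrix
open scoped BigOperators Classical ComplexOrder

namespace QPaper

variable {ι : Type*} [Fintype ι] [DecidableEq ι]

lemma abs_sum_conj_mul_le {κ : Type*} [Fintype κ] (u v : κ → ℂ) :
    ‖∑ i, (starRingEnd ℂ) (u i) * v i‖ ≤
      Real.sqrt (∑ i, ‖u i‖ ^ 2) * Real.sqrt (∑ i, ‖v i‖ ^ 2) := by
  have h := norm_inner_le_norm (𝕜 := ℂ)
    ((WithLp.equiv 2 (κ → ℂ)).symm u) ((WithLp.equiv 2 (κ → ℂ)).symm v)
  rw [EuclideanSpace.norm_eq, EuclideanSpace.norm_eq] at h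
  simpa [PiLp.inner_apply, RCLike.inner_apply, mul_comm] using h

lemma dot_le_opNorm {N : ℕ} (B : Matrix (Fin N) (Fin N) ℂ) (v : Fin N → ℂ) :
    ‖star v ⬝ᵥ (B *ᵥ v)‖ ≤ opNorm B * ∑ k, ‖v k‖ ^ 2 := by
  set w : EuclideanSpace ℂ (Fin N) := (WithLp.equiv 2 (Fin N → ℂ)).symm v with hw
  have h1 : (inner ℂ w (Matrix.toEuclideanCLM (𝕜 := ℂ) B w) : ℂ) = star v ⬝ᵥ (B *ᵥ v) := by
    rw [hw]
    simp [PiLp.inner_apply, RCLike.inner_apply, dotProduct, Matrix.toLin'_apply, mul_comm]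
  have h2 : ‖(inner ℂ w (Matrix.toEuclideanCLM (𝕜 := ℂ) B w) : ℂ)‖ ≤
      ‖w‖ * ‖Matrix.toEuclideanCLM (𝕜 := ℂ) B w‖ := norm_inner_le_norm _ _
  have h3 : ‖Matrix.toEuclideanCLM (𝕜 := ℂ) B w‖ ≤ opNorm B * ‖w‖ :=
    (Matrix.toEuclideanCLM (𝕜 := ℂ) B).le_opNorm w
  have h4 : ‖w‖ ^ 2 = ∑ k, ‖v k‖ ^ 2 := by
    rw [EuclideanSpace.norm_eq, Real.sq_sqrt (by positivity)]; rfl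
  calc ‖star v ⬝ᵥ (B *ᵥ v)‖
      = ‖(inner ℂ w (Matrix.toEuclideanCLM (𝕜 := ℂ) B w) : ℂ)‖ := by rw [h1]
    _ ≤ ‖w‖ * (opNorm B * ‖w‖) :=
        le_trans h2 (mul_le_mul_of_nonneg_left h3 (norm_nonneg _))
    _ = opNorm B * ‖w‖ ^ 2 := by ring
    _ = opNorm B * ∑ k, ‖v k‖ ^ 2 := by rw [h4]

lemma conjTranspose_mul_self_apply' {N : ℕ} (P : Matrix (Fin N) (Fin N) ℂ) (i : Fin N) :
    (Pᴴ * P) i i = ((∑ k, ‖P k i‖ ^ 2 : ℝ) : ℂ) := by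
  simp [Matrix.mul_apply, Matrix.conjTranspose_apply, RCLike.conj_mul]


/-- For all `X₁, …, X_m, Y₁, …, Y_m ∈ M_N(ℂ)`,
`|∑_j ⟨X_j, Y_j⟩| ≤ ‖(∑_j X_j* X_j)^{1/2}‖₁ · ‖∑_j Y_j* Y_j‖^{1/2}`, where
`⟨X, Y⟩ = N^{−1} tr(X* Y)`, `‖·‖₁` is the normalized trace norm, and `‖·‖` the operator
norm. -/
theorem vector_valued_cauchy_schwarz (N m : ℕ) (hN : 1 ≤ N) (hm : 1 ≤ m)
    (X Y : Fin m → Matrix (Fin N) (Fin N) ℂ) :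
    ‖∑ j : Fin m, ((X j)ᴴ * Y j).trace / N‖ ≤
      normOne (psdSqrt (∑ j : Fin m, (X j)ᴴ * X j)) *
        Real.sqrt (opNorm (∑ j : Fin m, (Y j)ᴴ * Y j)) := by
  have hN0 : (0:ℝ) < N := by exact_mod_cast hN
  set A := ∑ j : Fin m, (X j)ᴴ * X j with hAdef
  set B := ∑ j : Fin m, (Y j)ᴴ * Y j with hBdef
  have hA : A.PosSemidef := Finset.sum_induction _ _ (fun a b ha hb => ha.add hb)
    Matrix.PosSemidef.zero (fun j _ => Matrix.posSemidef_conjTranspose_mul_self (X j))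
  set U : Matrix (Fin N) (Fin N) ℂ := (hA.1.eigenvectorUnitary : Matrix (Fin N) (Fin N) ℂ)
    with hUdef
  have hU1 : star U * U = 1 := Unitary.coe_star_mul_self _
  have hU2 : U * star U = 1 := Unitary.coe_mul_star_self _
  have hdiag : star U * A * U = Matrix.diagonal (RCLike.ofReal ∘ hA.1.eigenvalues) :=
    by
      have h := hA.1.conjStarAlgAut_star_eigenvectorUnitary
      rw [Unitary.conjStarAlgAut_apply, Unitary.coe_star, star_star] at h
      exact h
  -- ∑ (XjU)ᴴ(XjU) = star U * A * U
  have hconj : ∀ (Z : Fin m → Matrix (Fin N) (Fin N) ℂ) (W : Matrix (Fin N) (Fin N) ℂ) j,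
      (Z j * W)ᴴ * (Z j * W) = star W * ((Z j)ᴴ * Z j) * W := fun Z W j => by
    simp only [Matrix.conjTranspose_mul, Matrix.star_eq_conjTranspose, Matrix.mul_assoc]
  have hPAs : star U * A * U = ∑ j, (X j * U)ᴴ * (X j * U) := by
    rw [hAdef, Finset.mul_sum, Finset.sum_mul]
    exact Finset.sum_congr rfl fun j _ => (hconj X U j).symm
  have hPBs : star U * B * U = ∑ j, (Y j * U)ᴴ * (Y j * U) := by
    rw [hBdef, Finset.mul_sum, Finset.sum_mul]
    exact Finset.sum_congr rfl fun j _ => (hconj Y U j).symm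
  -- diagonal entries
  have eP : ∀ i, (∑ j, ∑ k, ‖(X j * U) k i‖ ^ 2 : ℝ) = hA.1.eigenvalues i := by
    intro i
    have h := congrArg (fun M : Matrix (Fin N) (Fin N) ℂ => M i i) (hPAs.symm.trans hdiag)
    simp only [Matrix.sum_apply, conjTranspose_mul_self_apply', Matrix.diagonal_apply_eq,
      Function.comp_apply] at h
    rw [show (RCLike.ofReal (hA.1.eigenvalues i) : ℂ) = ((hA.1.eigenvalues i : ℝ) : ℂ) from rfl]
      at h
    exact_mod_cast h
  have eQ : ∀ i, ((star U * B * U) i i) = ((∑ j, ∑ k, ‖(Y j * U) k i‖ ^ 2 : ℝ) : ℂ) := by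
    intro i
    rw [hPBs]
    simp only [Matrix.sum_apply, conjTranspose_mul_self_apply']
    push_cast
    rfl
  have hUcol : ∀ i, (∑ k, ‖U k i‖ ^ 2 : ℝ) = 1 := by
    intro i
    have h : (Uᴴ * U) i i = (1 : Matrix (Fin N) (Fin N) ℂ) i i := by
      rw [← Matrix.star_eq_conjTranspose, hU1]
    rw [conjTranspose_mul_self_apply', Matrix.one_apply_eq] at h
    exact_mod_cast h
  have hBound : ∀ i, (∑ j, ∑ k, ‖(Y j * U) k i‖ ^ 2 : ℝ) ≤ opNorm B := by
    intro i
    have h2 : (star U * B * U) i i = star (fun k => U k i) ⬝ᵥ (B *ᵥ fun k => U k i) := by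
      simp only [Matrix.mul_apply, dotProduct, Matrix.mulVec, Matrix.star_eq_conjTranspose,
        Matrix.conjTranspose_apply, dotProduct, Pi.star_apply, Finset.sum_mul, Finset.mul_sum]
      rw [Finset.sum_comm]
      exact Finset.sum_congr rfl fun k _ => Finset.sum_congr rfl fun l _ => by ring
    have h3 := dot_le_opNorm B (fun k => U k i)
    rw [← h2, eQ i] at h3
    rw [hUcol i, mul_one] at h3
    have h5 : ‖((∑ j, ∑ k, ‖(Y j * U) k i‖ ^ 2 : ℝ) : ℂ)‖
        = (∑ j, ∑ k, ‖(Y j * U) k i‖ ^ 2 : ℝ) := by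
      rw [Complex.norm_real, Real.norm_eq_abs, abs_of_nonneg (by positivity)]
    linarith [h3, h5.symm.le]
  -- trace rewriting
  have hT : ∑ j : Fin m, ((X j)ᴴ * Y j).trace
      = ∑ i : Fin N, ∑ j : Fin m, ∑ k,
          (starRingEnd ℂ) ((X j * U) k i) * ((Y j * U) k i) := by
    have htr : ∀ j, ((X j)ᴴ * Y j).trace = ((X j * U)ᴴ * (Y j * U)).trace := by
      intro j
      rw [show (X j * U)ᴴ * (Y j * U) = star U * ((X j)ᴴ * Y j) * U by
        simp only [Matrix.conjTranspose_mul, Matrix.star_eq_conjTranspose, Matrix.mul_assoc]]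
      rw [Matrix.trace_mul_cycle, ← Matrix.mul_assoc, hU2, Matrix.one_mul]
    rw [Finset.sum_congr rfl fun j _ => htr j, Finset.sum_comm]
    simp only [Matrix.trace, Matrix.diag, Matrix.mul_apply, Matrix.conjTranspose_apply]
    rfl
  -- per-i Cauchy-Schwarz
  have key : ∀ i, ‖∑ j, ∑ k,
      (starRingEnd ℂ) ((X j * U) k i) * ((Y j * U) k i)‖
      ≤ Real.sqrt (hA.1.eigenvalues i) * Real.sqrt (opNorm B) := by
    intro i
    have h := abs_sum_conj_mul_le (κ := Fin m × Fin N)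
      (fun p => (X p.1 * U) p.2 i) (fun p => (Y p.1 * U) p.2 i)
    rw [Fintype.sum_prod_type, Fintype.sum_prod_type, Fintype.sum_prod_type] at h
    rw [eP i] at h
    refine h.trans ?_
    exact mul_le_mul_of_nonneg_left (Real.sqrt_le_sqrt (hBound i)) (Real.sqrt_nonneg _)
  -- total bound
  have hTot : ‖∑ j : Fin m, ((X j)ᴴ * Y j).trace‖
      ≤ (∑ i, Real.sqrt (hA.1.eigenvalues i)) * Real.sqrt (opNorm B) := by
    rw [hT]
    calc ‖∑ i : Fin N, ∑ j : Fin m, ∑ k,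
          (starRingEnd ℂ) ((X j * U) k i) * ((Y j * U) k i)‖
        ≤ ∑ i : Fin N, ‖∑ j : Fin m, ∑ k,
          (starRingEnd ℂ) ((X j * U) k i) * ((Y j * U) k i)‖ := by
          exact norm_sum_le _ _
      _ ≤ ∑ i, Real.sqrt (hA.1.eigenvalues i) * Real.sqrt (opNorm B) :=
          Finset.sum_le_sum fun i _ => key i
      _ = (∑ i, Real.sqrt (hA.1.eigenvalues i)) * Real.sqrt (opNorm B) := by
          rw [Finset.sum_mul]
  -- RHS computation
  have hRHS : normOne (psdSqrt A) = (∑ i, Real.sqrt (hA.1.eigenvalues i)) / N := by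
    set D : Matrix (Fin N) (Fin N) ℂ :=
      diagonal ((↑) ∘ (√·) ∘ hA.1.eigenvalues) with hDdef
    have hsA : psdSqrt A = U * D * star U := dif_pos hA
    have hDs : star D = D := by
      rw [hDdef, Matrix.star_eq_conjTranspose, Matrix.diagonal_conjTranspose]
      congr 1
      funext i
      simp
    have hDD : D * D = Matrix.diagonal (RCLike.ofReal ∘ hA.1.eigenvalues) := by
      rw [hDdef, Matrix.diagonal_mul_diagonal]
      congr 1
      funext i
      simp only [Function.comp_apply]
      rw [← Complex.ofReal_mul, Real.mul_self_sqrt (hA.eigenvalues_nonneg i)]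
      rfl
    have hspec : A = U * Matrix.diagonal (RCLike.ofReal ∘ hA.1.eigenvalues) * star U := by
      have h := hA.1.spectral_theorem
      rw [Unitary.conjStarAlgAut_apply] at h
      exact h
    have harg : (U * D * star U)ᴴ * (U * D * star U) = A := by
      rw [← Matrix.star_eq_conjTranspose, star_mul, star_mul, star_star, hDs]
      simp only [Matrix.mul_assoc]
      rw [← Matrix.mul_assoc (star U) U, hU1, Matrix.one_mul, ← Matrix.mul_assoc D D, hDD,
        ← Matrix.mul_assoc]
      exact hspec.symm
    have htr2 : (U * D * star U).trace = ((∑ i, Real.sqrt (hA.1.eigenvalues i) : ℝ) : ℂ) := by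
      rw [Matrix.trace_mul_cycle, hU1,
        Matrix.one_mul, hDdef, Matrix.trace_diagonal, Complex.ofReal_sum]
      exact Finset.sum_congr rfl fun i _ => rfl
    rw [hsA]
    unfold normOne
    rw [harg, hsA, htr2, Complex.ofReal_re, Fintype.card_fin]
  -- finish
  rw [hRHS, ← Finset.sum_div, norm_div, Complex.norm_natCast, div_mul_eq_mul_div,
    div_le_div_iff₀ hN0 hN0]
  calc ‖∑ j : Fin m, ((X j)ᴴ * Y j).trace‖ * N
      ≤ ((∑ i, Real.sqrt (hA.1.eigenvalues i)) * Real.sqrt (opNorm B)) * N :=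
        mul_le_mul_of_nonneg_right hTot hN0.le
    _ = (∑ i, Real.sqrt (hA.1.eigenvalues i)) * Real.sqrt (opNorm B) * N := rfl

end QPaper
end
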